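/- Let S(U) be the free graded commutative algebra on a graded vector space U and let Δ_n be a differential operator of order ≤ n on S(U) that vanishes on S^{<n}(U). Then Δ_n is uniquely determined by its restriction to S^n(U); that is, if two such operators agree on S^n(U), they agree on all of S(U). -/

import Mathlib

open scoped Classical

namespace BVPaper

variable {k : Type*} [Field k] [CharZero k]
variable {A : Type*} [Ring A] [Algebra k A]

/-- Left multiplication operator `L_a(b) = a*b`. -/
noncomputable def L (a : A) : A →ₗ[k] A := LinearMap.mulLeft k a

/-- Graded commutator of operators of degrees `p` and `q`:
`[P,Q] = P∘Q - (-1)^{pq} Q∘P`. -/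
noncomputable def gcomm (p q : ℤ) (P Q : A →ₗ[k] A) : A →ₗ[k] A :=
  P ∘ₗ Q - (((p * q).negOnePow : ℤˣ) : ℤ) • (Q ∘ₗ P)

/-- Graded commutativity of a grading `𝒜` on `A` (Koszul rule). -/
def GradedComm (𝒜 : ℤ → Submodule k A) : Prop :=
  ∀ (i j : ℤ) (a b : A), a ∈ 𝒜 i → b ∈ 𝒜 j →
    a * b = (((i * j).negOnePow : ℤˣ) : ℤ) • (b * a)

/-- `D` is a homogeneous operator of degree `d`. -/
def IsHomog (𝒜 : ℤ → Submodule k A) (d : ℤ) (D : A →ₗ[k] A) : Prop :=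
  ∀ (i : ℤ) (a : A), a ∈ 𝒜 i → D a ∈ 𝒜 (i + d)

/-- `D`, of degree `d`, is a differential operator of order `≤ n`:
all `(n+1)`-fold iterated graded commutators with left multiplications vanish. -/
def IsDiffOp (𝒜 : ℤ → Submodule k A) : ℕ → ℤ → (A →ₗ[k] A) → Prop
  | 0, d, D => ∀ (i : ℤ) (a : A), a ∈ 𝒜 i → gcomm d i D (L a) = 0
  | n + 1, d, D => ∀ (i : ℤ) (a : A), a ∈ 𝒜 i → IsDiffOp 𝒜 n (d + i) (gcomm d i D (L a))

/-- Iterated graded commutator `[[…[Q, L_{a_1}],…], L_{a_m}]` where the list records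
the degrees of the (homogeneous) elements `a_i`. -/
noncomputable def iterOp (Q : A →ₗ[k] A) (q : ℤ) : List (ℤ × A) → (A →ₗ[k] A)
  | [] => Q
  | (i, a) :: t => iterOp (gcomm q i Q (L a)) (q + i) t

/-- The Koszul sign of a permutation `σ` acting on elements of degrees `d i`. -/
def koszulSign {n : ℕ} (d : Fin n → ℤ) (σ : Equiv.Perm (Fin n)) : ℤˣ :=
  ∏ p ∈ Finset.univ.filter (fun p : Fin n × Fin n => p.1 < p.2 ∧ σ p.2 < σ p.1),
    (d p.1 * d p.2).negOnePow

/-- An `(n, m-n)`-shuffle. -/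
def IsShuffle (m n : ℕ) (σ : Equiv.Perm (Fin m)) : Prop :=
  (∀ i j : Fin m, i < j → (j : ℕ) < n → σ i < σ j) ∧
  (∀ i j : Fin m, i < j → n ≤ (i : ℕ) → σ i < σ j)




lemma gcomm_apply (p q : ℤ) (P Q : A →ₗ[k] A) (x : A) :
    gcomm p q P Q x = P (Q x) - (((p * q).negOnePow : ℤˣ) : ℤ) • Q (P x) := by
  simp only [gcomm, LinearMap.sub_apply, LinearMap.smul_apply, LinearMap.comp_apply]

lemma gcomm_sub (p q : ℤ) (P P' Q : A →ₗ[k] A) :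
    gcomm p q (P - P') Q = gcomm p q P Q - gcomm p q P' Q := by
  ext x
  simp [gcomm_apply, smul_sub]
  abel

lemma isDiffOp_sub (𝒜 : ℤ → Submodule k A) :
    ∀ (n : ℕ) (d : ℤ) (D D' : A →ₗ[k] A), IsDiffOp 𝒜 n d D → IsDiffOp 𝒜 n d D' →
      IsDiffOp 𝒜 n d (D - D') := by
  intro n
  induction n with
  | zero =>
    intro d D D' hD hD' i a ha
    rw [IsDiffOp] at hD hD'
    rw [gcomm_sub, hD i a ha, hD' i a ha, sub_zero]
  | succ n ih =>
    intro d D D' hD hD' i a ha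
    rw [gcomm_sub]
    exact ih (d + i) _ _ (hD i a ha) (hD' i a ha)

lemma key (𝒮 : ℕ → ℤ → Submodule k A)
    (hmul : ∀ (p q : ℕ) (i j : ℤ) (a b : A), a ∈ 𝒮 p i → b ∈ 𝒮 q j →
      a * b ∈ 𝒮 (p + q) (i + j))
    (htop : (⨆ (m : ℕ) (j : ℤ), 𝒮 m j) = ⊤)
    (hgen : ∀ (m : ℕ) (j : ℤ), 𝒮 (m + 1) j ≤ Submodule.span k
      {x : A | ∃ (i i' : ℤ) (u v : A), u ∈ 𝒮 1 i ∧ v ∈ 𝒮 m i' ∧ i + i' = j ∧ x = u * v}) :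
    ∀ (n : ℕ) (d : ℤ) (E : A →ₗ[k] A),
      IsDiffOp (fun j => ⨆ m : ℕ, 𝒮 m j) n d E →
      (∀ m : ℕ, m ≤ n → ∀ j : ℤ, ∀ x ∈ 𝒮 m j, E x = 0) → E = 0 := by
  intro n
  induction n with
  | zero =>
    intro d E hE hvan
    have hker : ∀ (m : ℕ) (j : ℤ), 𝒮 m j ≤ LinearMap.ker E := by
      intro m
      induction m with
      | zero =>
        intro j x hx
        exact LinearMap.mem_ker.mpr (hvan 0 le_rfl j x hx)
      | succ m ihm =>
        intro j
        refine le_trans (hgen m j) (Submodule.span_le.mpr ?_)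
        rintro _ ⟨i, i', u, v, hu, hv, hij, rfl⟩
        have hu' : u ∈ ⨆ m' : ℕ, 𝒮 m' i := le_iSup (fun m' => 𝒮 m' i) 1 hu
        have hE0 : gcomm d i E (L u) = 0 := hE i u hu'
        have hEv : E v = 0 := LinearMap.mem_ker.mp (ihm i' hv)
        have h1 : gcomm d i E (L u) v = 0 := by rw [hE0]; rfl
        rw [gcomm_apply] at h1
        simp only [L, LinearMap.mulLeft_apply] at h1
        have : E (u * v) = ((d * i).negOnePow : ℤ) • (u * E v) := sub_eq_zero.mp h1
        simp [LinearMap.mem_ker, this, hEv]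
    have htop' : ⊤ ≤ LinearMap.ker E := by
      rw [← htop]
      exact iSup_le fun m => iSup_le fun j => hker m j
    exact LinearMap.ext fun x => LinearMap.mem_ker.mp (htop' trivial)
  | succ n ih =>
    intro d E hE hvan
    have hker : ∀ (m : ℕ) (j : ℤ), 𝒮 m j ≤ LinearMap.ker E := by
      intro m
      induction m with
      | zero =>
        intro j x hx
        exact LinearMap.mem_ker.mpr (hvan 0 (Nat.zero_le _) j x hx)
      | succ m ihm =>
        intro j
        by_cases hmn : m + 1 ≤ n + 1
        · intro x hx
          exact LinearMap.mem_ker.mpr (hvan (m + 1) hmn j x hx)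
        · refine le_trans (hgen m j) (Submodule.span_le.mpr ?_)
          rintro _ ⟨i, i', u, v, hu, hv, hij, rfl⟩
          have hu' : u ∈ ⨆ m' : ℕ, 𝒮 m' i := le_iSup (fun m' => 𝒮 m' i) 1 hu
          have hEv : E v = 0 := LinearMap.mem_ker.mp (ihm i' hv)
          have hE0 : gcomm d i E (L u) = 0 := by
            refine ih (d + i) _ (hE i u hu') ?_
            intro m' hm' j' x' hx'
            have h1 : E (u * x') = 0 :=
              hvan (1 + m') (by omega) (i + j') _ (hmul 1 m' i j' u x' hu hx')
            have h2 : E x' = 0 := hvan m' (by omega) j' x' hx'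
            rw [gcomm_apply]
            simp [L, h1, h2]
          have h1 : gcomm d i E (L u) v = 0 := by rw [hE0]; rfl
          rw [gcomm_apply] at h1
          simp only [L, LinearMap.mulLeft_apply] at h1
          have : E (u * v) = ((d * i).negOnePow : ℤ) • (u * E v) := sub_eq_zero.mp h1
          simp [LinearMap.mem_ker, this, hEv]
    have htop' : ⊤ ≤ LinearMap.ker E := by
      rw [← htop]
      exact iSup_le fun m => iSup_le fun j => hker m j
    exact LinearMap.ext fun x => LinearMap.mem_ker.mp (htop' trivial)

theorem statement14 (𝒮 : ℕ → ℤ → Submodule k A)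
    (hcomm : GradedComm (fun j => ⨆ m : ℕ, 𝒮 m j))
    (hone : (1 : A) ∈ 𝒮 0 0)
    (hmul : ∀ (p q : ℕ) (i j : ℤ) (a b : A), a ∈ 𝒮 p i → b ∈ 𝒮 q j →
      a * b ∈ 𝒮 (p + q) (i + j))
    (htop : (⨆ (m : ℕ) (j : ℤ), 𝒮 m j) = ⊤)
    (hgen : ∀ (m : ℕ) (j : ℤ), 𝒮 (m + 1) j ≤ Submodule.span k
      {x : A | ∃ (i i' : ℤ) (u v : A), u ∈ 𝒮 1 i ∧ v ∈ 𝒮 m i' ∧ i + i' = j ∧ x = u * v})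
    (n : ℕ) (d : ℤ) (D D' : A →ₗ[k] A)
    (hD : IsDiffOp (fun j => ⨆ m : ℕ, 𝒮 m j) n d D)
    (hD' : IsDiffOp (fun j => ⨆ m : ℕ, 𝒮 m j) n d D')
    (hvan : ∀ m : ℕ, m < n → ∀ j : ℤ, ∀ x ∈ 𝒮 m j, D x = 0)
    (hvan' : ∀ m : ℕ, m < n → ∀ j : ℤ, ∀ x ∈ 𝒮 m j, D' x = 0)
    (hagree : ∀ j : ℤ, ∀ x ∈ 𝒮 n j, D x = D' x) :
    D = D' := by
  have hsub : IsDiffOp (fun j => ⨆ m : ℕ, 𝒮 m j) n d (D - D') :=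
    isDiffOp_sub _ n d D D' hD hD'
  have hvanE : ∀ m : ℕ, m ≤ n → ∀ j : ℤ, ∀ x ∈ 𝒮 m j, (D - D') x = 0 := by
    intro m hm j x hx
    rcases lt_or_eq_of_le hm with h | h
    · simp [hvan m h j x hx, hvan' m h j x hx]
    · subst h
      simp [sub_eq_zero, hagree j x hx]
  have : D - D' = 0 := key 𝒮 hmul htop hgen n d (D - D') hsub hvanE
  exact sub_eq_zero.mp this

end BVPaper
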